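/- arXiv:2509.12823 — 6 statements merged into one kernel-verified Lean document; each statement's English description precedes it below -/
import Mathlib

section
/- Let $\mathfrak{g}_{4,3}$ be the real Lie algebra with basis $(e_1,e_2,e_3,e_4)$, nonzero brackets $[e_4,e_1]=e_1$, $[e_4,e_3]=e_2$, and let $\widetilde{\mathfrak{g}} = \mathfrak{g}_{4,3} \oplus \mathbf{R}e_5$ be the central extension defined by the cocycle $\omega_4 \wedge \omega_2$ (so the additional nonzero bracket is $[e_4,e_2]=e_5$). Then $e_5$ lies in $C^3\widetilde{\mathfrak{g}}$ but not in $C^4\widetilde{\mathfrak{g}}$; that is, the central depth of $e_5$ in $\widetilde{\mathfrak{g}}$ is exactly 3. -/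
/-- Lower central series of the whole Lie algebra `g`: `lcsTop g (j-1)` is the paper's
`C^j 𝔤` (so `lcsTop g 0 = ⊤ = C^1 𝔤`). -/
def lcsTop (g : Type*) [LieRing g] [LieAlgebra ℝ g] : ℕ → Submodule ℝ g
  | 0 => ⊤
  | j + 1 => Submodule.span ℝ {z | ∃ x : g, ∃ y ∈ lcsTop g j, z = ⁅x, y⁆}

private lemma key_aux {L : Type*} [LieRing L] [LieAlgebra ℝ L] (b : Module.Basis (Fin 5) ℝ L)
    (S : Submodule ℝ L) (y : L) (h : ∀ i, ⁅b i, y⁆ ∈ S) (x : L) : ⁅x, y⁆ ∈ S := by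
  have hx : x ∈ Submodule.span ℝ (Set.range b) := by rw [b.span_eq]; trivial
  induction hx using Submodule.span_induction with
  | mem a ha => obtain ⟨i, rfl⟩ := ha; exact h i
  | zero => simp only [zero_lie, lie_zero]; exact S.zero_mem
  | add u v _ _ hu hv => rw [add_lie]; exact S.add_mem hu hv
  | smul c u _ hu => rw [smul_lie]; exact S.smul_mem c hu

private lemma step_aux {L : Type*} [LieRing L] [LieAlgebra ℝ L] (b : Module.Basis (Fin 5) ℝ L)
    (S : Submodule ℝ L) (A : Set L) (h : ∀ i, ∀ a ∈ A, ⁅b i, a⁆ ∈ S) :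
    ∀ x : L, ∀ y ∈ Submodule.span ℝ A, ⁅x, y⁆ ∈ S := by
  intro x y hy
  apply key_aux b S y _ x
  intro i
  induction hy using Submodule.span_induction with
  | mem a ha => exact h i a ha
  | zero => simp only [zero_lie, lie_zero]; exact S.zero_mem
  | add u v _ _ hu hv => rw [lie_add]; exact S.add_mem hu hv
  | smul c u _ hu => rw [lie_smul]; exact S.smul_mem c hu

private lemma fin5_cases (i : Fin 5) : i = 0 ∨ i = 1 ∨ i = 2 ∨ i = 3 ∨ i = 4 := by
  revert i; decide

/-- in the central extension `𝔤̃` of `𝔤₄,₃` with basis `(e₁,…,e₅)` and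
nonzero brackets `[e₄,e₁]=e₁`, `[e₄,e₃]=e₂`, `[e₄,e₂]=e₅`, with `e₅` central, the element
`e₅` lies in `C³𝔤̃` but not in `C⁴𝔤̃`: its central depth is exactly 3. -/
theorem statement6 {L : Type*} [LieRing L] [LieAlgebra ℝ L]
    (b : Module.Basis (Fin 5) ℝ L)
    (h41 : ⁅b 3, b 0⁆ = b 0) (h43 : ⁅b 3, b 2⁆ = b 1) (h42 : ⁅b 3, b 1⁆ = b 4)
    (h12 : ⁅b 0, b 1⁆ = 0) (h13 : ⁅b 0, b 2⁆ = 0) (h23 : ⁅b 1, b 2⁆ = 0)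
    (hcentral : ∀ i : Fin 5, ⁅b 4, b i⁆ = 0) :
    b 4 ∈ lcsTop L 2 ∧ b 4 ∉ lcsTop L 3 := by
  have h14 : ⁅b 0, b 3⁆ = -b 0 := by rw [← lie_skew, h41]
  have h34 : ⁅b 2, b 3⁆ = -b 1 := by rw [← lie_skew, h43]
  have h24 : ⁅b 1, b 3⁆ = -b 4 := by rw [← lie_skew, h42]
  have h21 : ⁅b 1, b 0⁆ = 0 := by rw [← lie_skew, h12, neg_zero]
  have h31 : ⁅b 2, b 0⁆ = 0 := by rw [← lie_skew, h13, neg_zero]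
  have h32 : ⁅b 2, b 1⁆ = 0 := by rw [← lie_skew, h23, neg_zero]
  have hc' : ∀ i : Fin 5, ⁅b i, b 4⁆ = 0 := fun i => by
    rw [← lie_skew, hcentral, neg_zero]
  constructor
  · have hb1 : b 1 ∈ lcsTop L 1 :=
      Submodule.subset_span ⟨b 3, b 2, by trivial, h43.symm⟩
    exact Submodule.subset_span ⟨b 3, b 1, hb1, h42.symm⟩
  · set S1 : Submodule ℝ L := Submodule.span ℝ {b 0, b 1, b 4} with hS1
    set S2 : Submodule ℝ L := Submodule.span ℝ {b 0, b 4} with hS2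
    set S3 : Submodule ℝ L := Submodule.span ℝ {b 0} with hS3
    have htab1 : ∀ i j : Fin 5, ⁅b i, b j⁆ ∈ S1 := by
      intro i j
      rcases fin5_cases i with rfl | rfl | rfl | rfl | rfl <;>
        rcases fin5_cases j with rfl | rfl | rfl | rfl | rfl <;>
        simp only [h41, h42, h43, h12, h13, h23, h14, h24, h34, h21, h31, h32,
          hcentral, hc', lie_self] <;>
        first
          | exact S1.zero_mem
          | exact S1.neg_mem (Submodule.subset_span (by simp))
          | exact Submodule.subset_span (by simp)
    have htab2 : ∀ i : Fin 5, ∀ a ∈ ({b 0, b 1, b 4} : Set L), ⁅b i, a⁆ ∈ S2 := by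
      rintro i a (rfl | rfl | rfl) <;>
        rcases fin5_cases i with rfl | rfl | rfl | rfl | rfl <;>
        try simp only [h41, h42, h43, h12, h13, h23, h14, h24, h34, h21, h31, h32, hcentral, hc', lie_self] <;>
        first
          | exact S2.zero_mem
          | exact Submodule.subset_span (by simp)
    have htab3 : ∀ i : Fin 5, ∀ a ∈ ({b 0, b 4} : Set L), ⁅b i, a⁆ ∈ S3 := by
      rintro i a (rfl | rfl) <;>
        rcases fin5_cases i with rfl | rfl | rfl | rfl | rfl <;>
        try simp only [h41, h42, h43, h12, h13, h23, h14, h24, h34, h21, h31, h32, hcentral, hc', lie_self] <;>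
        first
          | exact S3.zero_mem
          | exact Submodule.subset_span (by simp)
    have l1 : lcsTop L 1 ≤ S1 := by
      rw [show lcsTop L 1 = Submodule.span ℝ {z | ∃ x : L, ∃ y ∈ lcsTop L 0, z = ⁅x, y⁆} from rfl,
        Submodule.span_le]
      rintro z ⟨x, y, -, rfl⟩
      exact step_aux b S1 (Set.range b) (by rintro i _ ⟨j, rfl⟩; exact htab1 i j) x y
        (by rw [b.span_eq]; trivial)
    have l2 : lcsTop L 2 ≤ S2 := by
      rw [show lcsTop L 2 = Submodule.span ℝ {z | ∃ x : L, ∃ y ∈ lcsTop L 1, z = ⁅x, y⁆} from rfl,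
        Submodule.span_le]
      rintro z ⟨x, y, hy, rfl⟩
      exact step_aux b S2 _ htab2 x y (l1 hy)
    have l3 : lcsTop L 3 ≤ S3 := by
      rw [show lcsTop L 3 = Submodule.span ℝ {z | ∃ x : L, ∃ y ∈ lcsTop L 2, z = ⁅x, y⁆} from rfl,
        Submodule.span_le]
      rintro z ⟨x, y, hy, rfl⟩
      exact step_aux b S3 _ htab3 x y (l2 hy)
    intro hmem
    obtain ⟨c, hc⟩ := Submodule.mem_span_singleton.mp (l3 hmem)
    have h4 := congrArg (fun v => b.repr v 4) hc
    simp [b.repr_self, Finsupp.single_apply] at h4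
end

section
/- Let $\mathfrak{g}_{5,36}$ be the real Lie algebra with basis $(e_1,\dots,e_5)$ and nonzero brackets $[e_1,e_2]=e_3$, $[e_4,e_1]=e_1$, $[e_4,e_3]=e_3$, $[e_5,e_1]=-e_1$, $[e_5,e_2]=e_2$. Then $\mathfrak{g}_{5,36}$ is isomorphic to the Lie algebra of upper triangular traceless $3\times 3$ real matrices (the Borel subalgebra of $\mathfrak{sl}(3,\mathbf{R})$). -/
section
attribute [local instance] LieRing.ofAssociativeRing

noncomputable def Mb : Fin 5 → Matrix (Fin 3) (Fin 3) ℝ :=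
  ![!![0,1,0; 0,0,0; 0,0,0],
    !![0,0,0; 0,0,1; 0,0,0],
    !![0,0,1; 0,0,0; 0,0,0],
    !![2/3,0,0; 0,-1/3,0; 0,0,-1/3],
    !![-1/3,0,0; 0,2/3,0; 0,0,-1/3]]

lemma mm00 : ⁅Mb 0, Mb 0⁆ = 0 := by
  ext a c; fin_cases a <;> fin_cases c <;>
    simp [Mb, Ring.lie_def, Matrix.mul_apply, Fin.sum_univ_succ, Matrix.vecHead, Matrix.vecTail] <;> norm_num
lemma mm01 : ⁅Mb 0, Mb 1⁆ = Mb 2 := by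
  ext a c; fin_cases a <;> fin_cases c <;>
    simp [Mb, Ring.lie_def, Matrix.mul_apply, Fin.sum_univ_succ, Matrix.vecHead, Matrix.vecTail] <;> norm_num
lemma mm02 : ⁅Mb 0, Mb 2⁆ = 0 := by
  ext a c; fin_cases a <;> fin_cases c <;>
    simp [Mb, Ring.lie_def, Matrix.mul_apply, Fin.sum_univ_succ, Matrix.vecHead, Matrix.vecTail] <;> norm_num
lemma mm03 : ⁅Mb 0, Mb 3⁆ = -Mb 0 := by
  ext a c; fin_cases a <;> fin_cases c <;>
    simp [Mb, Ring.lie_def, Matrix.mul_apply, Fin.sum_univ_succ, Matrix.vecHead, Matrix.vecTail] <;> norm_num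
lemma mm04 : ⁅Mb 0, Mb 4⁆ = Mb 0 := by
  ext a c; fin_cases a <;> fin_cases c <;>
    simp [Mb, Ring.lie_def, Matrix.mul_apply, Fin.sum_univ_succ, Matrix.vecHead, Matrix.vecTail] <;> norm_num
lemma mm10 : ⁅Mb 1, Mb 0⁆ = -Mb 2 := by
  ext a c; fin_cases a <;> fin_cases c <;>
    simp [Mb, Ring.lie_def, Matrix.mul_apply, Fin.sum_univ_succ, Matrix.vecHead, Matrix.vecTail] <;> norm_num
lemma mm11 : ⁅Mb 1, Mb 1⁆ = 0 := by
  ext a c; fin_cases a <;> fin_cases c <;>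
    simp [Mb, Ring.lie_def, Matrix.mul_apply, Fin.sum_univ_succ, Matrix.vecHead, Matrix.vecTail] <;> norm_num
lemma mm12 : ⁅Mb 1, Mb 2⁆ = 0 := by
  ext a c; fin_cases a <;> fin_cases c <;>
    simp [Mb, Ring.lie_def, Matrix.mul_apply, Fin.sum_univ_succ, Matrix.vecHead, Matrix.vecTail] <;> norm_num
lemma mm13 : ⁅Mb 1, Mb 3⁆ = 0 := by
  ext a c; fin_cases a <;> fin_cases c <;>
    simp [Mb, Ring.lie_def, Matrix.mul_apply, Fin.sum_univ_succ, Matrix.vecHead, Matrix.vecTail] <;> norm_num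
lemma mm14 : ⁅Mb 1, Mb 4⁆ = -Mb 1 := by
  ext a c; fin_cases a <;> fin_cases c <;>
    simp [Mb, Ring.lie_def, Matrix.mul_apply, Fin.sum_univ_succ, Matrix.vecHead, Matrix.vecTail] <;> norm_num
lemma mm20 : ⁅Mb 2, Mb 0⁆ = 0 := by
  ext a c; fin_cases a <;> fin_cases c <;>
    simp [Mb, Ring.lie_def, Matrix.mul_apply, Fin.sum_univ_succ, Matrix.vecHead, Matrix.vecTail] <;> norm_num
lemma mm21 : ⁅Mb 2, Mb 1⁆ = 0 := by
  ext a c; fin_cases a <;> fin_cases c <;>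
    simp [Mb, Ring.lie_def, Matrix.mul_apply, Fin.sum_univ_succ, Matrix.vecHead, Matrix.vecTail] <;> norm_num
lemma mm22 : ⁅Mb 2, Mb 2⁆ = 0 := by
  ext a c; fin_cases a <;> fin_cases c <;>
    simp [Mb, Ring.lie_def, Matrix.mul_apply, Fin.sum_univ_succ, Matrix.vecHead, Matrix.vecTail] <;> norm_num
lemma mm23 : ⁅Mb 2, Mb 3⁆ = -Mb 2 := by
  ext a c; fin_cases a <;> fin_cases c <;>
    simp [Mb, Ring.lie_def, Matrix.mul_apply, Fin.sum_univ_succ, Matrix.vecHead, Matrix.vecTail] <;> norm_num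
lemma mm24 : ⁅Mb 2, Mb 4⁆ = 0 := by
  ext a c; fin_cases a <;> fin_cases c <;>
    simp [Mb, Ring.lie_def, Matrix.mul_apply, Fin.sum_univ_succ, Matrix.vecHead, Matrix.vecTail] <;> norm_num
lemma mm30 : ⁅Mb 3, Mb 0⁆ = Mb 0 := by
  ext a c; fin_cases a <;> fin_cases c <;>
    simp [Mb, Ring.lie_def, Matrix.mul_apply, Fin.sum_univ_succ, Matrix.vecHead, Matrix.vecTail] <;> norm_num
lemma mm31 : ⁅Mb 3, Mb 1⁆ = 0 := by
  ext a c; fin_cases a <;> fin_cases c <;>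
    simp [Mb, Ring.lie_def, Matrix.mul_apply, Fin.sum_univ_succ, Matrix.vecHead, Matrix.vecTail] <;> norm_num
lemma mm32 : ⁅Mb 3, Mb 2⁆ = Mb 2 := by
  ext a c; fin_cases a <;> fin_cases c <;>
    simp [Mb, Ring.lie_def, Matrix.mul_apply, Fin.sum_univ_succ, Matrix.vecHead, Matrix.vecTail] <;> norm_num
lemma mm33 : ⁅Mb 3, Mb 3⁆ = 0 := by
  ext a c; fin_cases a <;> fin_cases c <;>
    simp [Mb, Ring.lie_def, Matrix.mul_apply, Fin.sum_univ_succ, Matrix.vecHead, Matrix.vecTail] <;> norm_num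
lemma mm34 : ⁅Mb 3, Mb 4⁆ = 0 := by
  ext a c; fin_cases a <;> fin_cases c <;>
    simp [Mb, Ring.lie_def, Matrix.mul_apply, Fin.sum_univ_succ, Matrix.vecHead, Matrix.vecTail] <;> norm_num
lemma mm40 : ⁅Mb 4, Mb 0⁆ = -Mb 0 := by
  ext a c; fin_cases a <;> fin_cases c <;>
    simp [Mb, Ring.lie_def, Matrix.mul_apply, Fin.sum_univ_succ, Matrix.vecHead, Matrix.vecTail] <;> norm_num
lemma mm41 : ⁅Mb 4, Mb 1⁆ = Mb 1 := by
  ext a c; fin_cases a <;> fin_cases c <;>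
    simp [Mb, Ring.lie_def, Matrix.mul_apply, Fin.sum_univ_succ, Matrix.vecHead, Matrix.vecTail] <;> norm_num
lemma mm42 : ⁅Mb 4, Mb 2⁆ = 0 := by
  ext a c; fin_cases a <;> fin_cases c <;>
    simp [Mb, Ring.lie_def, Matrix.mul_apply, Fin.sum_univ_succ, Matrix.vecHead, Matrix.vecTail] <;> norm_num
lemma mm43 : ⁅Mb 4, Mb 3⁆ = 0 := by
  ext a c; fin_cases a <;> fin_cases c <;>
    simp [Mb, Ring.lie_def, Matrix.mul_apply, Fin.sum_univ_succ, Matrix.vecHead, Matrix.vecTail] <;> norm_num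
lemma mm44 : ⁅Mb 4, Mb 4⁆ = 0 := by
  ext a c; fin_cases a <;> fin_cases c <;>
    simp [Mb, Ring.lie_def, Matrix.mul_apply, Fin.sum_univ_succ, Matrix.vecHead, Matrix.vecTail] <;> norm_num
end

set_option maxHeartbeats 1000000 in
/-- the Lie algebra `𝔤₅,₃₆` with basis `(e₁,…,e₅)` and nonzero brackets
`[e₁,e₂]=e₃`, `[e₄,e₁]=e₁`, `[e₄,e₃]=e₃`, `[e₅,e₁]=-e₁`, `[e₅,e₂]=e₂` is isomorphic to
the Borel subalgebra of `𝔰𝔩(3,ℝ)`: the upper triangular traceless `3×3` real matrices. -/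
theorem statement9 {L : Type*} [LieRing L] [LieAlgebra ℝ L]
    (b : Module.Basis (Fin 5) ℝ L)
    (h12 : ⁅b 0, b 1⁆ = b 2) (h41 : ⁅b 3, b 0⁆ = b 0) (h43 : ⁅b 3, b 2⁆ = b 2)
    (h51 : ⁅b 4, b 0⁆ = -b 0) (h52 : ⁅b 4, b 1⁆ = b 1)
    (h13 : ⁅b 0, b 2⁆ = 0) (h23 : ⁅b 1, b 2⁆ = 0) (h42 : ⁅b 3, b 1⁆ = 0)
    (h53 : ⁅b 4, b 2⁆ = 0) (h45 : ⁅b 3, b 4⁆ = 0) :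
    ∃ f : L →ₗ[ℝ] Matrix (Fin 3) (Fin 3) ℝ,
      Function.Injective f ∧
      (∀ x y : L, f ⁅x, y⁆ = ⁅f x, f y⁆) ∧
      Set.range f =
        {A : Matrix (Fin 3) (Fin 3) ℝ | Matrix.trace A = 0 ∧ ∀ i j : Fin 3, j < i → A i j = 0} := by
  letI : LieRing (Matrix (Fin 3) (Fin 3) ℝ) := LieRing.ofAssociativeRing
  set f : L →ₗ[ℝ] Matrix (Fin 3) (Fin 3) ℝ := b.constr ℝ Mb with hf
  have hfb : ∀ i, f (b i) = Mb i := fun i => b.constr_basis ℝ Mb i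
  have hfx : ∀ x : L, f x = ∑ i, b.repr x i • Mb i := by
    intro x
    rw [hf, b.constr_apply_fintype ℝ]
    simp [Module.Basis.equivFun_apply]
  -- skew-derived brackets
  have h21 : ⁅b 1, b 0⁆ = -b 2 := by rw [← lie_skew, h12]
  have h31 : ⁅b 2, b 0⁆ = 0 := by rw [← lie_skew, h13, neg_zero]
  have h32 : ⁅b 2, b 1⁆ = 0 := by rw [← lie_skew, h23, neg_zero]
  have h14 : ⁅b 0, b 3⁆ = -b 0 := by rw [← lie_skew, h41]
  have h24 : ⁅b 1, b 3⁆ = 0 := by rw [← lie_skew, h42, neg_zero]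
  have h34 : ⁅b 2, b 3⁆ = -b 2 := by rw [← lie_skew, h43]
  have h15 : ⁅b 0, b 4⁆ = b 0 := by rw [← lie_skew, h51, neg_neg]
  have h25 : ⁅b 1, b 4⁆ = -b 1 := by rw [← lie_skew, h52]
  have h35 : ⁅b 2, b 4⁆ = 0 := by rw [← lie_skew, h53, neg_zero]
  have h54 : ⁅b 4, b 3⁆ = 0 := by rw [← lie_skew, h45, neg_zero]
  have k00 : f ⁅b 0, b 0⁆ = ⁅Mb 0, Mb 0⁆ := by rw [lie_self, lie_self, map_zero]
  have k01 : f ⁅b 0, b 1⁆ = ⁅Mb 0, Mb 1⁆ := by rw [h12, hfb 2, mm01]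
  have k02 : f ⁅b 0, b 2⁆ = ⁅Mb 0, Mb 2⁆ := by rw [h13, map_zero, mm02]
  have k03 : f ⁅b 0, b 3⁆ = ⁅Mb 0, Mb 3⁆ := by rw [h14, map_neg, hfb 0, mm03]
  have k04 : f ⁅b 0, b 4⁆ = ⁅Mb 0, Mb 4⁆ := by rw [h15, hfb 0, mm04]
  have k10 : f ⁅b 1, b 0⁆ = ⁅Mb 1, Mb 0⁆ := by rw [h21, map_neg, hfb 2, mm10]
  have k11 : f ⁅b 1, b 1⁆ = ⁅Mb 1, Mb 1⁆ := by rw [lie_self, lie_self, map_zero]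
  have k12 : f ⁅b 1, b 2⁆ = ⁅Mb 1, Mb 2⁆ := by rw [h23, map_zero, mm12]
  have k13 : f ⁅b 1, b 3⁆ = ⁅Mb 1, Mb 3⁆ := by rw [h24, map_zero, mm13]
  have k14 : f ⁅b 1, b 4⁆ = ⁅Mb 1, Mb 4⁆ := by rw [h25, map_neg, hfb 1, mm14]
  have k20 : f ⁅b 2, b 0⁆ = ⁅Mb 2, Mb 0⁆ := by rw [h31, map_zero, mm20]
  have k21 : f ⁅b 2, b 1⁆ = ⁅Mb 2, Mb 1⁆ := by rw [h32, map_zero, mm21]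
  have k22 : f ⁅b 2, b 2⁆ = ⁅Mb 2, Mb 2⁆ := by rw [lie_self, lie_self, map_zero]
  have k23 : f ⁅b 2, b 3⁆ = ⁅Mb 2, Mb 3⁆ := by rw [h34, map_neg, hfb 2, mm23]
  have k24 : f ⁅b 2, b 4⁆ = ⁅Mb 2, Mb 4⁆ := by rw [h35, map_zero, mm24]
  have k30 : f ⁅b 3, b 0⁆ = ⁅Mb 3, Mb 0⁆ := by rw [h41, hfb 0, mm30]
  have k31 : f ⁅b 3, b 1⁆ = ⁅Mb 3, Mb 1⁆ := by rw [h42, map_zero, mm31]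
  have k32 : f ⁅b 3, b 2⁆ = ⁅Mb 3, Mb 2⁆ := by rw [h43, hfb 2, mm32]
  have k33 : f ⁅b 3, b 3⁆ = ⁅Mb 3, Mb 3⁆ := by rw [lie_self, lie_self, map_zero]
  have k34 : f ⁅b 3, b 4⁆ = ⁅Mb 3, Mb 4⁆ := by rw [h45, map_zero, mm34]
  have k40 : f ⁅b 4, b 0⁆ = ⁅Mb 4, Mb 0⁆ := by rw [h51, map_neg, hfb 0, mm40]
  have k41 : f ⁅b 4, b 1⁆ = ⁅Mb 4, Mb 1⁆ := by rw [h52, hfb 1, mm41]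
  have k42 : f ⁅b 4, b 2⁆ = ⁅Mb 4, Mb 2⁆ := by rw [h53, map_zero, mm42]
  have k43 : f ⁅b 4, b 3⁆ = ⁅Mb 4, Mb 3⁆ := by rw [h54, map_zero, mm43]
  have k44 : f ⁅b 4, b 4⁆ = ⁅Mb 4, Mb 4⁆ := by rw [lie_self, lie_self, map_zero]
  have key : ∀ i j : Fin 5, f ⁅b i, b j⁆ = ⁅Mb i, Mb j⁆ := by
    intro i j
    fin_cases i <;> fin_cases j <;>
      first
      | exact k00 | exact k01 | exact k02 | exact k03 | exact k04
      | exact k10 | exact k11 | exact k12 | exact k13 | exact k14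
      | exact k20 | exact k21 | exact k22 | exact k23 | exact k24
      | exact k30 | exact k31 | exact k32 | exact k33 | exact k34
      | exact k40 | exact k41 | exact k42 | exact k43 | exact k44
  have hbrak : ∀ x y : L, f ⁅x, y⁆ = ⁅f x, f y⁆ := by
    intro x y
    conv_lhs => rw [← b.sum_repr x, ← b.sum_repr y]
    conv_rhs => rw [← b.sum_repr x, ← b.sum_repr y]
    simp only [Fin.sum_univ_five, add_lie, lie_add, smul_lie, lie_smul, map_add, map_smul,
      smul_add, hfb, k00, k01, k02, k03, k04, k10, k11, k12, k13, k14, k20, k21, k22, k23, k24, k30, k31, k32, k33, k34, k40, k41, k42, k43, k44]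
  -- left inverse
  have hleft : ∀ x : L, (f x 0 1) • b 0 + (f x 1 2) • b 1 + (f x 0 2) • b 2 +
      (2 * f x 0 0 + f x 1 1) • b 3 + (f x 0 0 + 2 * f x 1 1) • b 4 = x := by
    intro x
    conv_rhs => rw [← b.sum_repr x, Fin.sum_univ_five]
    rw [hfx]
    simp only [Finset.sum_apply, Matrix.smul_apply, Fin.sum_univ_five, smul_eq_mul]
    simp only [Mb, Matrix.cons_val, Matrix.of_apply, Fin.isValue, Matrix.add_apply, Matrix.smul_apply, smul_eq_mul]
    norm_num [Mb, Matrix.vecHead, Matrix.vecTail]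
    module
  have hinj : Function.Injective f := by
    intro x y hxy
    have hx := hleft x
    rw [hxy] at hx
    exact hx.symm.trans (hleft y)
  refine ⟨f, hinj, hbrak, ?_⟩
  ext A
  constructor
  · rintro ⟨x, rfl⟩
    rw [hfx]
    constructor
    · rw [Fin.sum_univ_five]
      simp only [Matrix.trace_add, Matrix.trace_smul]
      simp only [Mb, Matrix.cons_val, Matrix.of_apply, Fin.isValue, Matrix.trace_fin_three, smul_eq_mul]
      norm_num [Mb, Matrix.trace_fin_three, Matrix.vecHead, Matrix.vecTail]
    · intro i j hij
      rw [Fin.sum_univ_five]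
      simp only [Matrix.add_apply, Matrix.smul_apply, smul_eq_mul]
      fin_cases i <;> fin_cases j <;>
        first
        | exact absurd hij (by decide)
        | (simp only [Mb, Matrix.cons_val, Matrix.of_apply, Fin.isValue]; norm_num [Mb, Matrix.vecHead, Matrix.vecTail])
  · rintro ⟨htr, hlow⟩
    refine ⟨(A 0 1) • b 0 + (A 1 2) • b 1 + (A 0 2) • b 2 +
      (2 * A 0 0 + A 1 1) • b 3 + (A 0 0 + 2 * A 1 1) • b 4, ?_⟩
    have h10 := hlow 1 0 (by decide)
    have h20 := hlow 2 0 (by decide)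
    have h21' := hlow 2 1 (by decide)
    have h22 : A 2 2 = -A 0 0 - A 1 1 := by
      rw [Matrix.trace_fin_three] at htr; linarith
    simp only [map_add, map_smul, hfb]
    ext i j
    fin_cases i <;> fin_cases j <;>
      simp only [Matrix.add_apply, Matrix.smul_apply, smul_eq_mul] <;>
      simp only [Mb, Matrix.cons_val, Matrix.of_apply, Fin.isValue] <;>
      norm_num [Mb, Matrix.vecHead, Matrix.vecTail, h10, h20, h21', h22] <;>
      (try ring) <;> (try rfl) <;> (try exact h10.symm) <;> (try exact h20.symm) <;>
      (try exact h21'.symm) <;> (try exact h22.symm) <;> linarith [h22]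
end

section
/- Let $f_G, g_G, f_H, g_H: \mathbf{N} \to \mathbf{N}$ be nondecreasing functions with $f_G(n) = n^d$ and $g_G(n) = n^e$ for integers $d, e \geq 1$, and suppose $f_H(n) \preccurlyeq f_G(n \cdot u(n)) \cdot f_H(u(g_G(n \cdot u(n))))$ where $u(n) = \log(2+n)$ and $f_H$ is nondecreasing with $f_H(n) \geq 1$. Then $f_H$ is polynomially bounded. -/
private lemma aux_four_sq_le_two_pow : ∀ s : ℕ, 8 ≤ s → 4 * s ^ 2 ≤ 2 ^ s := by
  intro s hs
  induction s with
  | zero => omega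
  | succ k ih =>
    rcases Nat.lt_or_ge k 8 with h | h
    · have hk : k = 7 := by omega
      subst hk; norm_num
    · have h1 := ih (by omega)
      have h2 : 4 * (k + 1) ^ 2 ≤ 2 * (4 * k ^ 2) := by nlinarith
      calc 4 * (k + 1) ^ 2 ≤ 2 * (4 * k ^ 2) := h2
        _ ≤ 2 * 2 ^ k := by omega
        _ = 2 ^ (k + 1) := by ring

private lemma aux_mul_sq_le_two_pow (c t : ℕ) (ht : 2 * c + 8 ≤ t) :
    c * t ^ 2 ≤ 2 ^ t := by
  set s := t - c with hs
  have hts : t = s + c := by omega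
  have hsc : c ≤ s := by omega
  have hs8 : 8 ≤ s := by omega
  have h1 : c * t ^ 2 ≤ 2 ^ c * t ^ 2 :=
    Nat.mul_le_mul_right _ (le_of_lt (Nat.lt_two_pow_self (n := c)))
  have h2 : t ^ 2 ≤ 4 * s ^ 2 := by
    have : t ≤ 2 * s := by omega
    nlinarith
  have h3 : 4 * s ^ 2 ≤ 2 ^ s := aux_four_sq_le_two_pow s hs8
  calc c * t ^ 2 ≤ 2 ^ c * t ^ 2 := h1
    _ ≤ 2 ^ c * (4 * s ^ 2) := Nat.mul_le_mul_left _ h2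
    _ ≤ 2 ^ c * 2 ^ s := Nat.mul_le_mul_left _ h3
    _ = 2 ^ t := by rw [← pow_add]; congr 1; omega

/-- if `f_G(n) = n^d`, `g_G(n) = n^e` and the nondecreasing function
`f_H ≥ 1` satisfies `f_H(n) ≼ f_G(n·u(n)) · f_H(u(g_G(n·u(n))))` with `u(n) = log(2+n)`,
then `f_H` is polynomially bounded. -/
theorem statement15 (fG gG fH gH : ℕ → ℕ) (d e : ℕ) (hd : 1 ≤ d) (he : 1 ≤ e)
    (hfG : ∀ n, fG n = n ^ d) (hgG : ∀ n, gG n = n ^ e)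
    (hfH_mono : Monotone fH) (hfH_one : ∀ n, 1 ≤ fH n) (hgH_mono : Monotone gH)
    (u : ℕ → ℕ) (hu : ∀ n, u n = Nat.log 2 (2 + n))
    (hrec : ∃ C : ℕ, 0 < C ∧ ∀ n, fH n ≤
      C * (fG ((C * n + C) * u (C * n + C)) *
            fH (u (gG ((C * n + C) * u (C * n + C))))) + C * n + C) :
    ∃ A D : ℕ, ∀ n, fH n ≤ A * (n + 2) ^ D := by
  obtain ⟨C, hC, hrec⟩ := hrec
  set B := C * (C + 2) with hB
  set K := e * B + 4 * e + 2 with hK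
  set c := (K + 2) ^ 2 with hc
  set T := 2 * c + 8 with hT
  set N := 2 ^ T + C * B ^ d + 1 with hN
  set A := fH N + C with hA
  clear_value B K c T N A
  refine ⟨A, 4 * d + 4, ?_⟩
  intro n
  induction n using Nat.strong_induction_on with
  | _ n ih =>
  rcases Nat.lt_or_ge n N with hn | hn
  · -- small case
    have h1 : fH n ≤ fH N := hfH_mono (le_of_lt hn)
    have h2 : 1 ≤ (n + 2) ^ (4 * d + 4) := Nat.one_le_pow _ _ (by omega)
    calc fH n ≤ A := by omega
      _ = A * 1 := (mul_one A).symm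
      _ ≤ A * (n + 2) ^ (4 * d + 4) := Nat.mul_le_mul_left _ h2
  · -- main case, n ≥ N
    set p := (C * n + C) * u (C * n + C) with hp_def
    set m := u (gG p) with hm_def
    have hrecn : fH n ≤ C * (p ^ d * fH m) + C * n + C := by
      have := hrec n
      rwa [hfG] at this
    -- bound p
    have hup : u (C * n + C) ≤ C * n + C + 2 := by
      rw [hu]
      have := Nat.log_le_self 2 (2 + (C * n + C))
      omega
    have hp : p ≤ B * (n + 2) ^ 2 := by
      have h1 : C * n + C ≤ C * (n + 2) := by nlinarith
      have h2 : u (C * n + C) ≤ (C + 2) * (n + 2) := by nlinarith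
      calc p ≤ (C * (n + 2)) * ((C + 2) * (n + 2)) := Nat.mul_le_mul h1 h2
        _ = B * (n + 2) ^ 2 := by rw [hB]; ring
    have hmeq : m = Nat.log 2 (2 + p ^ e) := by rw [hm_def, hgG, hu]
    clear_value p m
    -- log of n+2
    set t := Nat.log 2 (n + 2) with ht_def
    have ht1 : 1 ≤ t := by
      have h2 : (2 : ℕ) ^ 1 ≤ n + 2 := by omega
      exact (Nat.le_log_iff_pow_le (by norm_num) (by omega)).mpr h2
    have htpow : n + 2 ≤ 2 ^ (t + 1) :=
      le_of_lt (Nat.lt_pow_succ_log_self (by norm_num) (n + 2))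
    have h2t : 2 ^ t ≤ n + 2 := Nat.pow_log_le_self 2 (by omega)
    have hT_le_t : T ≤ t := by
      have h2T : (2 : ℕ) ^ T ≤ n + 2 := by omega
      exact (Nat.le_log_iff_pow_le (by norm_num) (by omega)).mpr h2T
    clear_value t
    -- bound p by a power of two
    have hp2 : p ≤ 2 ^ (B + 2 * t + 2) := by
      have hBle : B ≤ 2 ^ B := le_of_lt (Nat.lt_two_pow_self (n := B))
      calc p ≤ B * (n + 2) ^ 2 := hp
        _ ≤ 2 ^ B * (2 ^ (t + 1)) ^ 2 :=
            Nat.mul_le_mul hBle (Nat.pow_le_pow_left htpow 2)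
        _ = 2 ^ (B + 2 * t + 2) := by rw [← pow_mul, ← pow_add]; ring_nf
    -- bound m
    have hm : m ≤ K * t := by
      have hpe : p ^ e ≤ 2 ^ (e * (B + 2 * t + 2)) := by
        calc p ^ e ≤ (2 ^ (B + 2 * t + 2)) ^ e := Nat.pow_le_pow_left hp2 e
          _ = 2 ^ (e * (B + 2 * t + 2)) := by rw [← pow_mul]; ring_nf
      have h2pe : 2 + p ^ e ≤ 2 ^ (e * (B + 2 * t + 2) + 2) := by
        have h4 : (2 : ℕ) ^ (e * (B + 2 * t + 2) + 2) = 4 * 2 ^ (e * (B + 2 * t + 2)) := by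
          rw [pow_add]; ring
        have hge1 : 1 ≤ (2 : ℕ) ^ (e * (B + 2 * t + 2)) := Nat.one_le_two_pow
        omega
      have hlog : m ≤ e * (B + 2 * t + 2) + 2 := by
        rw [hmeq]
        calc Nat.log 2 (2 + p ^ e) ≤ Nat.log 2 (2 ^ (e * (B + 2 * t + 2) + 2)) :=
              Nat.log_mono_right h2pe
          _ = e * (B + 2 * t + 2) + 2 := Nat.log_pow (by norm_num) _
      have key : e * (B + 2 * t + 2) + 2 ≤ K * t := by
        have h1 : e * B * 1 ≤ e * B * t := Nat.mul_le_mul_left _ ht1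
        have h2 : e * 1 ≤ e * t := Nat.mul_le_mul_left _ ht1
        have hexp : K * t = e * B * t + 4 * (e * t) + 2 * t := by rw [hK]; ring
        rw [hexp]
        have hlhs : e * (B + 2 * t + 2) + 2 = e * B * 1 + 2 * (e * t) + 2 * (e * 1) + 2 := by
          ring
        rw [hlhs]
        omega
      omega
    -- (m+2)^2 ≤ n+2
    have hmsq : (m + 2) ^ 2 ≤ n + 2 := by
      have h1 : m + 2 ≤ (K + 2) * t := by
        have h2t' : 2 ≤ 2 * t := by omega
        calc m + 2 ≤ K * t + 2 * t := by linarith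
          _ = (K + 2) * t := by ring
      have h2 : (m + 2) ^ 2 ≤ c * t ^ 2 := by
        calc (m + 2) ^ 2 ≤ ((K + 2) * t) ^ 2 := Nat.pow_le_pow_left h1 2
          _ = (K + 2) ^ 2 * t ^ 2 := by ring
          _ = c * t ^ 2 := by rw [hc]
      have h3 : c * t ^ 2 ≤ 2 ^ t := aux_mul_sq_le_two_pow c t (by omega)
      omega
    -- m < n
    have hmn : m < n := by
      by_contra h
      push_neg at h
      have h1 : (n + 2) ^ 2 ≤ (m + 2) ^ 2 := Nat.pow_le_pow_left (by omega) 2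
      have h2 : n + 2 < (n + 2) ^ 2 := lt_self_pow₀ (by omega) (by omega)
      omega
    have hfm : fH m ≤ A * (m + 2) ^ (4 * d + 4) := ih m hmn
    -- assemble
    have hDsplit : (m + 2) ^ (4 * d + 4) = ((m + 2) ^ 2) ^ (2 * d + 2) := by
      have hpm := pow_mul (m + 2) 2 (2 * d + 2)
      have hex : 4 * d + 4 = 2 * (2 * d + 2) := by ring
      rw [hex, hpm]
    have hmD : (m + 2) ^ (4 * d + 4) ≤ (n + 2) ^ (2 * d + 2) := by
      rw [hDsplit]
      exact Nat.pow_le_pow_left hmsq _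
    have h2Tpos : 1 ≤ 2 ^ T := Nat.one_le_two_pow
    have hCB : C * B ^ d ≤ n + 2 := by omega
    have hAC : C ≤ A := by omega
    calc fH n ≤ C * (p ^ d * fH m) + C * n + C := hrecn
      _ ≤ C * ((B * (n + 2) ^ 2) ^ d * (A * (n + 2) ^ (2 * d + 2))) + C * n + C := by
          have hfm2 : fH m ≤ A * (n + 2) ^ (2 * d + 2) :=
            le_trans hfm (Nat.mul_le_mul_left _ hmD)
          have hpd : p ^ d ≤ (B * (n + 2) ^ 2) ^ d := Nat.pow_le_pow_left hp d
          exact Nat.add_le_add_right (Nat.add_le_add_right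
            (Nat.mul_le_mul_left _ (Nat.mul_le_mul hpd hfm2)) _) _
      _ = (C * B ^ d) * A * (n + 2) ^ (4 * d + 2) + C * n + C := by
          rw [mul_pow, ← pow_mul]
          have hpa : (n + 2) ^ (2 * d) * (n + 2) ^ (2 * d + 2) = (n + 2) ^ (4 * d + 2) := by
            rw [← pow_add]; congr 1; omega
          calc C * (B ^ d * (n + 2) ^ (2 * d) * (A * (n + 2) ^ (2 * d + 2))) + C * n + C
              = (C * B ^ d) * A * ((n + 2) ^ (2 * d) * (n + 2) ^ (2 * d + 2)) + C * n + C := by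
                ring
            _ = (C * B ^ d) * A * (n + 2) ^ (4 * d + 2) + C * n + C := by rw [hpa]
      _ ≤ (n + 2) * A * (n + 2) ^ (4 * d + 2) + A * (n + 2) := by
          have h1 : C * n + C ≤ A * (n + 2) := by
            have hCA : C * (n + 2) ≤ A * (n + 2) := Nat.mul_le_mul_right _ hAC
            have hce : C * (n + 2) = C * n + 2 * C := by ring
            omega
          have h2 : (C * B ^ d) * A * (n + 2) ^ (4 * d + 2) ≤
              (n + 2) * A * (n + 2) ^ (4 * d + 2) :=
            Nat.mul_le_mul_right _ (Nat.mul_le_mul_right _ hCB)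
          omega
      _ ≤ A * (n + 2) ^ (4 * d + 3) + A * (n + 2) ^ (4 * d + 3) := by
          have h1 : (n + 2) * A * (n + 2) ^ (4 * d + 2) = A * (n + 2) ^ (4 * d + 3) := by
            rw [pow_succ]; ring
          have h2 : A * (n + 2) ≤ A * (n + 2) ^ (4 * d + 3) := by
            have : n + 2 ≤ (n + 2) ^ (4 * d + 3) :=
              Nat.le_self_pow (by omega) _
            exact Nat.mul_le_mul_left _ this
          omega
      _ = 2 * (A * (n + 2) ^ (4 * d + 3)) := by ring
      _ ≤ (n + 2) * (A * (n + 2) ^ (4 * d + 3)) := by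
          have : 2 ≤ n + 2 := by omega
          exact Nat.mul_le_mul_right _ this
      _ = A * (n + 2) ^ (4 * d + 4) := by rw [pow_succ]; ring
end

section
/- Let $\mathfrak{fil}$ be the 4-dimensional filiform Lie algebra with basis $(e_1,e_2,e_3,e_4)$, nonzero brackets $[e_1,e_2]=e_3$, $[e_1,e_3]=e_4$, and let $\mathfrak{g}^1_{5,30} = \mathfrak{fil} \rtimes \mathbf{R}e_5$ where $[e_5,e_1]=e_1$, $[e_5,e_2]=0$, $[e_5,e_3]=e_3$, $[e_5,e_4]=2e_4$. Let $\mathfrak{u} = \operatorname{span}(e_1,e_3,e_4)$. Then $\mathfrak{u}$ is an ideal of $\mathfrak{g}^1_{5,30}$, equal to $C^j\mathfrak{g}^1_{5,30}$ for every $j \geq 2$; in particular the lower central series stabilizes at $\mathfrak{u}$. -/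
/-- in `𝔤₅,₃₀¹ = 𝔣𝔦𝔩 ⋊ ℝe₅` with `[e₁,e₂]=e₃`, `[e₁,e₃]=e₄`,
`[e₅,e₁]=e₁`, `[e₅,e₂]=0`, `[e₅,e₃]=e₃`, `[e₅,e₄]=2e₄`, the subspace
`𝔲 = span(e₁,e₃,e₄)` is an ideal, equal to `C^j 𝔤` for every `j ≥ 2`. -/
theorem statement17 {L : Type*} [LieRing L] [LieAlgebra ℝ L]
    (b : Module.Basis (Fin 5) ℝ L)
    (h12 : ⁅b 0, b 1⁆ = b 2) (h13 : ⁅b 0, b 2⁆ = b 3)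
    (h51 : ⁅b 4, b 0⁆ = b 0) (h52 : ⁅b 4, b 1⁆ = 0)
    (h53 : ⁅b 4, b 2⁆ = b 2) (h54 : ⁅b 4, b 3⁆ = (2 : ℝ) • b 3)
    (h14 : ⁅b 0, b 3⁆ = 0) (h23 : ⁅b 1, b 2⁆ = 0) (h24 : ⁅b 1, b 3⁆ = 0)
    (h34 : ⁅b 2, b 3⁆ = 0) :
    (∀ x : L, ∀ y ∈ Submodule.span ℝ ({b 0, b 2, b 3} : Set L),
      ⁅x, y⁆ ∈ Submodule.span ℝ ({b 0, b 2, b 3} : Set L)) ∧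
    (∀ j : ℕ, 2 ≤ j → lcsTop L (j - 1) = Submodule.span ℝ ({b 0, b 2, b 3} : Set L)) := by
  set U : Submodule ℝ L := Submodule.span ℝ ({b 0, b 2, b 3} : Set L) with hU
  have hb0 : b 0 ∈ U := Submodule.subset_span (by simp)
  have hb2 : b 2 ∈ U := Submodule.subset_span (by simp)
  have hb3 : b 3 ∈ U := Submodule.subset_span (by simp)
  have h21 : ⁅b 1, b 0⁆ = -b 2 := by rw [← lie_skew, h12]
  have h31 : ⁅b 2, b 0⁆ = -b 3 := by rw [← lie_skew, h13]
  have h41 : ⁅b 3, b 0⁆ = 0 := by rw [← lie_skew, h14, neg_zero]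
  have h32 : ⁅b 2, b 1⁆ = 0 := by rw [← lie_skew, h23, neg_zero]
  have h42 : ⁅b 3, b 1⁆ = 0 := by rw [← lie_skew, h24, neg_zero]
  have h43 : ⁅b 3, b 2⁆ = 0 := by rw [← lie_skew, h34, neg_zero]
  have h15 : ⁅b 0, b 4⁆ = -b 0 := by rw [← lie_skew, h51]
  have h25 : ⁅b 1, b 4⁆ = 0 := by rw [← lie_skew, h52, neg_zero]
  have h35 : ⁅b 2, b 4⁆ = -b 2 := by rw [← lie_skew, h53]
  have h45 : ⁅b 3, b 4⁆ = -((2:ℝ) • b 3) := by rw [← lie_skew, h54]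
  have hbase : ∀ i j : Fin 5, ⁅b i, b j⁆ ∈ U := by
    intro i j
    fin_cases i <;> fin_cases j <;>
      simp only [Fin.isValue, show (⟨0, by omega⟩ : Fin 5) = 0 from rfl,
        show (⟨1, by omega⟩ : Fin 5) = 1 from rfl, show (⟨2, by omega⟩ : Fin 5) = 2 from rfl,
        show (⟨3, by omega⟩ : Fin 5) = 3 from rfl, show (⟨4, by omega⟩ : Fin 5) = 4 from rfl,
        lie_self, h12, h13, h14, h21, h31, h41, h23, h32, h24, h42, h34, h43,
        h51, h52, h53, h54, h15, h25, h35, h45] <;>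
      first
        | exact U.zero_mem
        | exact hb0 | exact hb2 | exact hb3
        | exact U.neg_mem hb0 | exact U.neg_mem hb2 | exact U.neg_mem hb3
        | exact U.smul_mem _ hb3
        | exact U.neg_mem (U.smul_mem _ hb3)
  -- any bracket lands in U
  have hLL : ∀ x y : L, ⁅x, y⁆ ∈ U := by
    have htop : ∀ z : L, z ∈ Submodule.span ℝ (Set.range b) := by
      intro z; rw [b.span_eq]; trivial
    intro x y
    refine Submodule.span_induction (p := fun x _ => ⁅x, y⁆ ∈ U) ?_ ?_ ?_ ?_ (htop x)
    · rintro _ ⟨i, rfl⟩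
      refine Submodule.span_induction (p := fun y _ => ⁅b i, y⁆ ∈ U) ?_ ?_ ?_ ?_ (htop y)
      · rintro _ ⟨j, rfl⟩; exact hbase i j
      · simp
      · intro u v _ _ hu hv; rw [lie_add]; exact U.add_mem hu hv
      · intro a u _ hu; rw [lie_smul]; exact U.smul_mem a hu
    · simp
    · intro u v _ _ hu hv; rw [add_lie]; exact U.add_mem hu hv
    · intro a u _ hu; rw [smul_lie]; exact U.smul_mem a hu
  have hideal : ∀ x : L, ∀ y ∈ U, ⁅x, y⁆ ∈ U := fun x y _ => hLL x y
  refine ⟨hideal, ?_⟩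
  have hstep : ∀ n : ℕ, 1 ≤ n → lcsTop L n = U := by
    intro n hn
    induction n with
    | zero => omega
    | succ m ih =>
      apply le_antisymm
      · rw [lcsTop]
        refine Submodule.span_le.2 ?_
        rintro _ ⟨x, y, _, rfl⟩; exact hLL x y
      · rcases Nat.eq_or_lt_of_le hn with h | h
        · -- m = 0
          have hm : m = 0 := by omega
          subst hm
          rw [lcsTop]
          refine Submodule.span_le.2 ?_
          rintro z (rfl | rfl | rfl) <;> refine Submodule.subset_span ?_
          · exact ⟨b 4, b 0, trivial, h51.symm⟩
          · exact ⟨b 0, b 1, trivial, h12.symm⟩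
          · exact ⟨b 0, b 2, trivial, h13.symm⟩
        · have him : lcsTop L m = U := ih (by omega)
          rw [lcsTop, him]
          refine Submodule.span_le.2 ?_
          rintro z (rfl | rfl | rfl) <;> refine Submodule.subset_span ?_
          · exact ⟨b 4, b 0, hb0, h51.symm⟩
          · exact ⟨b 4, b 2, hb2, h53.symm⟩
          · exact ⟨b 0, b 2, hb2, h13.symm⟩
  intro j hj
  exact hstep (j - 1) (by omega)
end

section
/- Let $\mathfrak{g}^1_{5,30}$ be the real Lie algebra with basis $(e_1,\dots,e_5)$ and nonzero brackets $[e_1,e_2]=e_3$, $[e_1,e_3]=e_4$, $[e_5,e_1]=e_1$, $[e_5,e_3]=e_3$, $[e_5,e_4]=2e_4$, and let $\mathfrak{u} = \operatorname{span}(e_1,e_3,e_4)$. In the symmetric square $\mathfrak{u} \odot \mathfrak{u}$, let $K$ be the subspace spanned by elements $[x,y]\odot z - x \odot [y,z]$ for $x,y,z \in \mathfrak{u}$. Then $K = \operatorname{span}(e_4\odot e_4,\ e_3 \odot e_4,\ e_1\odot e_4)$, and in the quotient module $\operatorname{Kill}(\mathfrak{u}) = (\mathfrak{u}\odot\mathfrak{u})/K$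 with the action induced by $X\cdot(u\odot v)=[X,u]\odot v + u\odot[X,v]$, the simultaneous kernel of the actions of $e_2$ and $e_5$ is zero. -/
/-- in `𝔤₅,₃₀¹` with `𝔲 = span(e₁,e₃,e₄)`, the submodule `K` of the
symmetric square `𝔲 ⊙ 𝔲` spanned by `[x,y] ⊙ z - x ⊙ [y,z]` for `x,y,z ∈ 𝔲` equals
`span(e₄⊙e₄, e₃⊙e₄, e₁⊙e₄)`, and in the Killing module `(𝔲⊙𝔲)/K` the simultaneous
kernel of the actions of `e₂` and `e₅` is zero. -/
theorem statement18 {L S : Type*} [LieRing L] [LieAlgebra ℝ L]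
    [AddCommGroup S] [Module ℝ S]
    (b : Module.Basis (Fin 5) ℝ L)
    (h12 : ⁅b 0, b 1⁆ = b 2) (h13 : ⁅b 0, b 2⁆ = b 3)
    (h51 : ⁅b 4, b 0⁆ = b 0) (h52 : ⁅b 4, b 1⁆ = 0)
    (h53 : ⁅b 4, b 2⁆ = b 2) (h54 : ⁅b 4, b 3⁆ = (2 : ℝ) • b 3)
    (h14 : ⁅b 0, b 3⁆ = 0) (h23 : ⁅b 1, b 2⁆ = 0) (h24 : ⁅b 1, b 3⁆ = 0)
    (h34 : ⁅b 2, b 3⁆ = 0)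
    (U : Submodule ℝ L) (hU : U = Submodule.span ℝ ({b 0, b 2, b 3} : Set L))
    -- `S` models the symmetric square `𝔲 ⊙ 𝔲`
    (sym : L →ₗ[ℝ] L →ₗ[ℝ] S) (hsym : ∀ x y : L, sym x y = sym y x)
    (s : Module.Basis (Fin 6) ℝ S)
    (hs0 : s 0 = sym (b 0) (b 0)) (hs1 : s 1 = sym (b 0) (b 2))
    (hs2 : s 2 = sym (b 0) (b 3)) (hs3 : s 3 = sym (b 2) (b 2))
    (hs4 : s 4 = sym (b 2) (b 3)) (hs5 : s 5 = sym (b 3) (b 3))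
    (K : Submodule ℝ S)
    (hK : K = Submodule.span ℝ
      {w : S | ∃ x ∈ U, ∃ y ∈ U, ∃ z ∈ U, w = sym ⁅x, y⁆ z - sym x ⁅y, z⁆})
    -- the induced derivation action of `L` on `𝔲 ⊙ 𝔲`
    (act : L → S →ₗ[ℝ] S)
    (hact : ∀ X : L, ∀ x ∈ U, ∀ y ∈ U,
      act X (sym x y) = sym ⁅X, x⁆ y + sym x ⁅X, y⁆) :
    K = Submodule.span ℝ
        ({sym (b 3) (b 3), sym (b 2) (b 3), sym (b 0) (b 3)} : Set S) ∧
    (∀ w : S, act (b 1) w ∈ K → act (b 4) w ∈ K → w ∈ K) := by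
  have hb0U : b 0 ∈ U := by rw [hU]; exact Submodule.subset_span (by simp)
  have hb2U : b 2 ∈ U := by rw [hU]; exact Submodule.subset_span (by simp)
  have hb3U : b 3 ∈ U := by rw [hU]; exact Submodule.subset_span (by simp)
  have e20 : ⁅b 2, b 0⁆ = -b 3 := by rw [← lie_skew, h13]
  have e30 : ⁅b 3, b 0⁆ = (0 : L) := by rw [← lie_skew, h14, neg_zero]
  have e32 : ⁅b 3, b 2⁆ = (0 : L) := by rw [← lie_skew, h34, neg_zero]
  have hcoords : ∀ x ∈ U, ∃ a c d : ℝ, x = a • b 0 + c • b 2 + d • b 3 := by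
    intro x hx
    rw [hU, Submodule.mem_span_insert] at hx
    obtain ⟨a, z, hz, rfl⟩ := hx
    rw [Submodule.mem_span_insert] at hz
    obtain ⟨c, z', hz', rfl⟩ := hz
    rw [Submodule.mem_span_singleton] at hz'
    obtain ⟨d, rfl⟩ := hz'
    exact ⟨a, c, d, by module⟩
  have hbr : ∀ x ∈ U, ∀ y ∈ U, ∃ r : ℝ, ⁅x, y⁆ = r • b 3 := by
    intro x hx y hy
    obtain ⟨a, c, d, rfl⟩ := hcoords x hx
    obtain ⟨a', c', d', rfl⟩ := hcoords y hy
    refine ⟨a * c' - c * a', ?_⟩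
    simp only [add_lie, lie_add, smul_lie, lie_smul, h13, h14, h34, e20, e30, e32,
      lie_self, smul_zero, smul_neg, add_zero, zero_add, smul_smul]
    module
  set T : Set S := {sym (b 3) (b 3), sym (b 2) (b 3), sym (b 0) (b 3)} with hT
  have h0T : sym (b 0) (b 3) ∈ Submodule.span ℝ T := Submodule.subset_span (by simp [hT])
  have h2T : sym (b 2) (b 3) ∈ Submodule.span ℝ T := Submodule.subset_span (by simp [hT])
  have h3T : sym (b 3) (b 3) ∈ Submodule.span ℝ T := Submodule.subset_span (by simp [hT])
  have hsymU : ∀ x ∈ U, sym x (b 3) ∈ Submodule.span ℝ T := by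
    intro x hx
    obtain ⟨a, c, d, rfl⟩ := hcoords x hx
    simp only [map_add, map_smul, LinearMap.add_apply, LinearMap.smul_apply]
    exact Submodule.add_mem _ (Submodule.add_mem _ (Submodule.smul_mem _ _ h0T)
      (Submodule.smul_mem _ _ h2T)) (Submodule.smul_mem _ _ h3T)
  have hKT : K = Submodule.span ℝ T := by
    rw [hK]
    apply le_antisymm
    · rw [Submodule.span_le]
      rintro w ⟨x, hx, y, hy, z, hz, rfl⟩
      obtain ⟨r, hr⟩ := hbr x hx y hy
      obtain ⟨t, ht⟩ := hbr y hy z hz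
      rw [hr, ht]
      simp only [map_smul, LinearMap.smul_apply]
      have hz3 : sym (b 3) z ∈ Submodule.span ℝ T := by
        rw [hsym]; exact hsymU z hz
      exact Submodule.sub_mem _ (Submodule.smul_mem _ _ hz3)
        (Submodule.smul_mem _ _ (hsymU x hx))
    · have g5 : sym (b 3) (b 3) ∈ Submodule.span ℝ
          {w : S | ∃ x ∈ U, ∃ y ∈ U, ∃ z ∈ U, w = sym ⁅x, y⁆ z - sym x ⁅y, z⁆} :=
        Submodule.subset_span ⟨b 0, hb0U, b 2, hb2U, b 3, hb3U, by rw [h13, h34]; simp⟩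
      have g4 : sym (b 2) (b 3) ∈ Submodule.span ℝ
          {w : S | ∃ x ∈ U, ∃ y ∈ U, ∃ z ∈ U, w = sym ⁅x, y⁆ z - sym x ⁅y, z⁆} :=
        Submodule.subset_span ⟨b 0, hb0U, b 2, hb2U, b 2, hb2U, by
          rw [h13, lie_self, hsym (b 2) (b 3)]; simp⟩
      have g2' : (2 : ℝ) • sym (b 0) (b 3) ∈ Submodule.span ℝ
          {w : S | ∃ x ∈ U, ∃ y ∈ U, ∃ z ∈ U, w = sym ⁅x, y⁆ z - sym x ⁅y, z⁆} :=
        Submodule.subset_span ⟨b 0, hb0U, b 2, hb2U, b 0, hb0U, by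
          rw [h13, e20, hsym (b 3) (b 0), map_neg]; module⟩
      have g2 : sym (b 0) (b 3) ∈ Submodule.span ℝ
          {w : S | ∃ x ∈ U, ∃ y ∈ U, ∃ z ∈ U, w = sym ⁅x, y⁆ z - sym x ⁅y, z⁆} := by
        have := Submodule.smul_mem _ ((2 : ℝ)⁻¹) g2'
        rw [smul_smul] at this
        norm_num at this
        exact this
      rw [Submodule.span_le]
      rintro w hw
      simp only [hT, Set.mem_insert_iff, Set.mem_singleton_iff] at hw
      rcases hw with rfl | rfl | rfl
      · exact g5
      · exact g4
      · exact g2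
  have hmem : ∀ v : S, v ∈ Submodule.span ℝ T ↔
      (s.repr v 0 = 0 ∧ s.repr v 1 = 0 ∧ s.repr v 3 = 0) := by
    have hT' : T = {s 5, s 4, s 2} := by rw [hs5, hs4, hs2]
    intro v
    constructor
    · intro hv
      rw [hT'] at hv
      have hle : Submodule.span ℝ ({s 5, s 4, s 2} : Set S) ≤
          LinearMap.ker (s.coord 0) ⊓ (LinearMap.ker (s.coord 1) ⊓ LinearMap.ker (s.coord 3)) := by
        rw [Submodule.span_le]
        rintro x hx
        simp only [Set.mem_insert_iff, Set.mem_singleton_iff] at hx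
        rcases hx with rfl | rfl | rfl <;>
          simp [Submodule.mem_inf, LinearMap.mem_ker, Module.Basis.coord_apply, Module.Basis.repr_self,
            Finsupp.single_apply]
      have h := hle hv
      simp only [Submodule.mem_inf, LinearMap.mem_ker, Module.Basis.coord_apply] at h
      exact ⟨h.1, h.2.1, h.2.2⟩
    · rintro ⟨h0, h1, h3⟩
      have hv : v = s.repr v 2 • s 2 + s.repr v 4 • s 4 + s.repr v 5 • s 5 := by
        have hsum := s.sum_repr v
        rw [Fin.sum_univ_six] at hsum
        conv_lhs => rw [← hsum]
        rw [h0, h1, h3]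
        module
      rw [hT', hv]
      exact Submodule.add_mem _ (Submodule.add_mem _
        (Submodule.smul_mem _ _ (Submodule.subset_span (by simp)))
        (Submodule.smul_mem _ _ (Submodule.subset_span (by simp))))
        (Submodule.smul_mem _ _ (Submodule.subset_span (by simp)))
  refine ⟨hKT, ?_⟩
  intro w _ h4
  have A0 : act (b 4) (s 0) = (2 : ℝ) • s 0 := by
    rw [hs0, hact _ _ hb0U _ hb0U, h51, ← hs0]; module
  have A1 : act (b 4) (s 1) = (2 : ℝ) • s 1 := by
    rw [hs1, hact _ _ hb0U _ hb2U, h51, h53, ← hs1]; module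
  have A2 : act (b 4) (s 2) = (3 : ℝ) • s 2 := by
    rw [hs2, hact _ _ hb0U _ hb3U, h51, h54, map_smul, ← hs2]; module
  have A3 : act (b 4) (s 3) = (2 : ℝ) • s 3 := by
    rw [hs3, hact _ _ hb2U _ hb2U, h53, ← hs3]; module
  have A4 : act (b 4) (s 4) = (3 : ℝ) • s 4 := by
    rw [hs4, hact _ _ hb2U _ hb3U, h53, h54, map_smul, ← hs4]; module
  have A5 : act (b 4) (s 5) = (4 : ℝ) • s 5 := by
    rw [hs5, hact _ _ hb3U _ hb3U, h54, map_smul, map_smul, LinearMap.smul_apply, ← hs5]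
    module
  have hsum := s.sum_repr w
  rw [Fin.sum_univ_six] at hsum
  have hact4 : act (b 4) w = s.repr w 0 • ((2 : ℝ) • s 0) + s.repr w 1 • ((2 : ℝ) • s 1)
      + s.repr w 2 • ((3 : ℝ) • s 2) + s.repr w 3 • ((2 : ℝ) • s 3)
      + s.repr w 4 • ((3 : ℝ) • s 4) + s.repr w 5 • ((4 : ℝ) • s 5) := by
    conv_lhs => rw [← hsum]
    simp only [map_add, map_smul, A0, A1, A2, A3, A4, A5]
  rw [hKT] at h4
  obtain ⟨k0, k1, k3⟩ := (hmem _).mp h4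
  rw [hact4] at k0 k1 k3
  simp [map_add, map_smul, Finsupp.add_apply, Finsupp.smul_apply, Module.Basis.repr_self,
    Finsupp.single_apply] at k0 k1 k3
  rw [hKT]
  exact (hmem w).mpr ⟨by linarith, by linarith, by linarith⟩
end

section
/- Let $\mathfrak{g}^{\gamma}_{5,8}$ be the real Lie algebra with basis $(e_1,\dots,e_5)$ and nonzero brackets $[e_5,e_2]=e_1$, $[e_5,e_3]=e_3$, $[e_5,e_4]=\gamma e_4$ with $\gamma \neq 0$. Let $\mathfrak{u} = \operatorname{span}(e_3, e_4)$. Then $\mathfrak{u}$ is an ideal of $\mathfrak{g}^{\gamma}_{5,8}$, the quotient $\mathfrak{g}^{\gamma}_{5,8}/\mathfrak{u}$ is isomorphic to the 3-dimensional Heisenberg Lie algebra, and there is no abelian Lie subalgebra of $\mathfrak{g}^{\gamma}_{5,8}$ complementary to $\mathfrak{u}$ as a vector space. -/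
set_option maxHeartbeats 1000000

/-- in `𝔤₅,₈^γ` (basis `(e₁,…,e₅)`, nonzero brackets `[e₅,e₂]=e₁`,
`[e₅,e₃]=e₃`, `[e₅,e₄]=γe₄`, `γ ≠ 0`), the subspace `𝔲 = span(e₃,e₄)` is an ideal, the
quotient `𝔤/𝔲` is isomorphic to the 3-dimensional Heisenberg Lie algebra (realized here
as the strictly upper triangular `3×3` matrices, via a surjective bracket-preserving map
with kernel `𝔲`), and there is no abelian Lie subalgebra complementary to `𝔲`. -/
theorem statement19 {L : Type*} [LieRing L] [LieAlgebra ℝ L]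
    (b : Module.Basis (Fin 5) ℝ L) (γ : ℝ) (hγ : γ ≠ 0)
    (h52 : ⁅b 4, b 1⁆ = b 0) (h53 : ⁅b 4, b 2⁆ = b 2) (h54 : ⁅b 4, b 3⁆ = γ • b 3)
    (h51 : ⁅b 4, b 0⁆ = 0)
    (h12 : ⁅b 0, b 1⁆ = 0) (h13 : ⁅b 0, b 2⁆ = 0) (h14 : ⁅b 0, b 3⁆ = 0)
    (h23 : ⁅b 1, b 2⁆ = 0) (h24 : ⁅b 1, b 3⁆ = 0) (h34 : ⁅b 2, b 3⁆ = 0)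
    (U : Submodule ℝ L) (hU : U = Submodule.span ℝ ({b 2, b 3} : Set L)) :
    (∀ x : L, ∀ y ∈ U, ⁅x, y⁆ ∈ U) ∧
    (∃ f : L →ₗ[ℝ] Matrix (Fin 3) (Fin 3) ℝ,
      (∀ x y : L, f ⁅x, y⁆ = ⁅f x, f y⁆) ∧
      LinearMap.ker f = U ∧
      Set.range f =
        {A : Matrix (Fin 3) (Fin 3) ℝ | ∀ i j : Fin 3, ¬ i < j → A i j = 0}) ∧
    ¬ ∃ V : LieSubalgebra ℝ L,
        (∀ x ∈ V, ∀ y ∈ V, ⁅x, y⁆ = (0 : L)) ∧ IsCompl U (V : Submodule ℝ L) := by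
  -- reversed brackets
  have h25 : ⁅b 1, b 4⁆ = -b 0 := by rw [← lie_skew, h52]
  have h35 : ⁅b 2, b 4⁆ = -b 2 := by rw [← lie_skew, h53]
  have h45 : ⁅b 3, b 4⁆ = -(γ • b 3) := by rw [← lie_skew, h54]
  have h15 : ⁅b 0, b 4⁆ = 0 := by rw [← lie_skew, h51, neg_zero]
  have h21 : ⁅b 1, b 0⁆ = 0 := by rw [← lie_skew, h12, neg_zero]
  have h31 : ⁅b 2, b 0⁆ = 0 := by rw [← lie_skew, h13, neg_zero]
  have h41 : ⁅b 3, b 0⁆ = 0 := by rw [← lie_skew, h14, neg_zero]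
  have h32 : ⁅b 2, b 1⁆ = 0 := by rw [← lie_skew, h23, neg_zero]
  have h42 : ⁅b 3, b 1⁆ = 0 := by rw [← lie_skew, h24, neg_zero]
  have h43 : ⁅b 3, b 2⁆ = 0 := by rw [← lie_skew, h34, neg_zero]
  letI : LieRing (Matrix (Fin 3) (Fin 3) ℝ) := LieRing.ofAssociativeRing
  letI : LieRing (Module.End ℝ L) := LieRing.ofAssociativeRing
  letI : LieRing (Module.End ℝ (Matrix (Fin 3) (Fin 3) ℝ)) := LieRing.ofAssociativeRing
  set E : Fin 3 → Fin 3 → Matrix (Fin 3) (Fin 3) ℝ := fun i j => Matrix.single i j 1 with hE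
  set f : L →ₗ[ℝ] Matrix (Fin 3) (Fin 3) ℝ := b.constr ℝ ![E 0 2, E 1 2, 0, 0, E 0 1] with hf
  have hfb0 : f (b 0) = E 0 2 := by rw [hf, Module.Basis.constr_basis]; rfl
  have hfb1 : f (b 1) = E 1 2 := by rw [hf, Module.Basis.constr_basis]; rfl
  have hfb2 : f (b 2) = 0 := by rw [hf, Module.Basis.constr_basis]; rfl
  have hfb3 : f (b 3) = 0 := by rw [hf, Module.Basis.constr_basis]; rfl
  have hfb4 : f (b 4) = E 0 1 := by rw [hf, Module.Basis.constr_basis]; rfl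
  -- bracket preservation
  have key : ∀ x y : L, f ⁅x, y⁆ = ⁅f x, f y⁆ := by
    have hFG : (LinearMap.llcomp ℝ L L (Matrix (Fin 3) (Fin 3) ℝ) f).comp (LieAlgebra.ad ℝ L).toLinearMap
        = (((LieAlgebra.ad ℝ (Matrix (Fin 3) (Fin 3) ℝ)).toLinearMap).comp f).compl₂ f := by
      apply LinearMap.ext_basis b b
      intro i j
      simp only [LinearMap.comp_apply, LinearMap.llcomp_apply, LinearMap.compl₂_apply,
        LieHom.coe_toLinearMap, LieAlgebra.ad_apply]
      fin_cases i <;> fin_cases j <;>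
        simp (config := { decide := true }) [h52, h53, h54, h51, h12, h13, h14, h23, h24, h34,
          h25, h35, h45, h15, h21, h31, h41, h32, h42, h43,
          hfb0, hfb1, hfb2, hfb3, hfb4, hE, Ring.lie_def,
          Matrix.single_mul_single_same, Matrix.single_mul_single_of_ne]
    intro x y
    have := congrFun (congrArg DFunLike.coe (congrFun (congrArg DFunLike.coe hFG) x)) y
    simpa only [LinearMap.comp_apply, LinearMap.llcomp_apply, LinearMap.compl₂_apply,
      LieHom.coe_toLinearMap, LieAlgebra.ad_apply] using this
  -- general formula
  have hfx : ∀ x : L, f x = b.repr x 0 • E 0 2 + b.repr x 1 • E 1 2 + b.repr x 4 • E 0 1 := by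
    intro x
    conv_lhs => rw [← b.sum_repr x]
    rw [map_sum, Fin.sum_univ_five]
    simp only [map_smul, hfb0, hfb1, hfb2, hfb3, hfb4, smul_zero, add_zero]
  have hb2U : b 2 ∈ U := by rw [hU]; exact Submodule.subset_span (by left; rfl)
  have hb3U : b 3 ∈ U := by rw [hU]; exact Submodule.subset_span (by right; rfl)
  -- kernel
  have hker : LinearMap.ker f = U := by
    apply le_antisymm
    · intro x hx
      have hx0 : f x = 0 := hx
      rw [hfx x] at hx0
      have ent : ∀ i j : Fin 3,
          (b.repr x 0 • E 0 2 + b.repr x 1 • E 1 2 + b.repr x 4 • E 0 1) i j = 0 :=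
        fun i j => by rw [hx0]; rfl
      have hc0 : b.repr x 0 = 0 := by
        have := ent 0 2; simpa [hE, Matrix.add_apply, Matrix.smul_apply] using this
      have hc1 : b.repr x 1 = 0 := by
        have := ent 1 2; simpa [hE, Matrix.add_apply, Matrix.smul_apply] using this
      have hc4 : b.repr x 4 = 0 := by
        have := ent 0 1; simpa [hE, Matrix.add_apply, Matrix.smul_apply] using this
      have hxeq : x = b.repr x 2 • b 2 + b.repr x 3 • b 3 := by
        conv_lhs => rw [← b.sum_repr x]
        rw [Fin.sum_univ_five, hc0, hc1, hc4]
        simp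
      rw [hxeq]
      exact Submodule.add_mem U (Submodule.smul_mem U _ hb2U) (Submodule.smul_mem U _ hb3U)
    · rw [hU, Submodule.span_le]
      rintro z (rfl | rfl)
      · exact hfb2
      · exact hfb3
  -- range
  have hrange : Set.range f =
      {A : Matrix (Fin 3) (Fin 3) ℝ | ∀ i j : Fin 3, ¬ i < j → A i j = 0} := by
    ext A
    constructor
    · rintro ⟨x, rfl⟩ i j hij
      rw [hfx x]
      fin_cases i <;> fin_cases j <;>
        first
        | exact absurd (by decide) hij
        | simp [hE, Matrix.add_apply, Matrix.smul_apply]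
    · intro hA
      refine ⟨A 0 1 • b 4 + A 1 2 • b 1 + A 0 2 • b 0, ?_⟩
      rw [map_add, map_add, map_smul, map_smul, map_smul, hfb4, hfb1, hfb0]
      ext i j
      fin_cases i <;> fin_cases j <;>
        simp [hE, Matrix.add_apply, Matrix.smul_apply] <;>
        first
        | exact (hA 0 0 (by decide)).symm
        | exact (hA 1 0 (by decide)).symm
        | exact (hA 1 1 (by decide)).symm
        | exact (hA 2 0 (by decide)).symm
        | exact (hA 2 1 (by decide)).symm
        | exact (hA 2 2 (by decide)).symm
  refine ⟨?_, ⟨f, key, hker, hrange⟩, ?_⟩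
  · intro x y hy
    rw [← hker] at hy ⊢
    have : f y = 0 := hy
    show f ⁅x, y⁆ = 0
    rw [key, this, lie_zero]
  · rintro ⟨V, habV, hcompl⟩
    have htop : U ⊔ (V : Submodule ℝ L) = ⊤ := hcompl.codisjoint.eq_top
    obtain ⟨u, hu, v, hv, huv⟩ :=
      Submodule.mem_sup.1 (htop ▸ Submodule.mem_top : b 4 ∈ U ⊔ (V : Submodule ℝ L))
    obtain ⟨u', hu', v', hv', huv'⟩ :=
      Submodule.mem_sup.1 (htop ▸ Submodule.mem_top : b 1 ∈ U ⊔ (V : Submodule ℝ L))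
    have hfu : f u = 0 := by rw [← hker] at hu; exact hu
    have hfu' : f u' = 0 := by rw [← hker] at hu'; exact hu'
    have hfv : f v = E 0 1 := by
      have : f (b 4) = f u + f v := by rw [← huv, map_add]
      rw [hfb4, hfu, zero_add] at this; exact this.symm
    have hfv' : f v' = E 1 2 := by
      have : f (b 1) = f u' + f v' := by rw [← huv', map_add]
      rw [hfb1, hfu', zero_add] at this; exact this.symm
    have hz : ⁅v, v'⁆ = 0 :=
      habV v (V.mem_toSubmodule.1 hv) v' (V.mem_toSubmodule.1 hv')
    have hcontra := key v v'
    rw [hz, map_zero, hfv, hfv'] at hcontra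
    have : (0 : Matrix (Fin 3) (Fin 3) ℝ) 0 2 = ⁅E 0 1, E 1 2⁆ 0 2 := by rw [hcontra]
    rw [hE] at this
    simp [Ring.lie_def, Matrix.sub_apply] at this
end
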